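/- In the per-FoV binary model, suppose (p3D, p2D, r) satisfies the memory constraint with slack at least α (i.e., Σ_i (p2D_i + α·p3D_i) ≤ δ − α) and the rendering constraint, and suppose there exists a FoV j served by remote 3D transmission, i.e., p3D_j = 0 and r_j = 0. Then the modified decision obtained by setting p3D_j := 1 (all other components unchanged) satisfies both constraints and strictly decreases the total delay Σ_i T_i, namely the total delay decreases by exactly α·Q2D/R > 0. Consequently, no memory-slack solution that leaves a FoV on the remote 3D transmission path can be optimal, so the memory constraint is tight at the optimum. -/

import Mathlib

lemma sum_diff_single {V : ℕ} (j : Fin V) (F G : Fin V → ℝ)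
    (h : ∀ i, i ≠ j → F i = G i) :
    ∑ i, F i = ∑ i, G i + (F j - G j) := by
  rw [Finset.sum_eq_sum_sdiff_singleton_add (Finset.mem_univ j) F,
      Finset.sum_eq_sum_sdiff_singleton_add (Finset.mem_univ j) G]
  have : ∑ i ∈ Finset.univ \ {j}, F i = ∑ i ∈ Finset.univ \ {j}, G i := by
    apply Finset.sum_congr rfl
    intro i hi
    exact h i (by simpa using (Finset.mem_sdiff.mp hi).2)
  rw [this]; ring

/-- Per-FoV binary model: with memory slack at least `α`, upgrading a FoV `j`
served by remote 3D transmission (`p3D j = 0`, `r j = 0`) to on-device 3D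
prefetching (`p3D j := 1`) keeps both constraints and strictly decreases the
total delay by exactly `α·Q2D/R > 0`; hence the original decision is not
optimal (the memory constraint must be tight at the optimum). -/
theorem stmt2 (V : ℕ) (Q2D R f o α δ Qmax : ℝ)
    (hQ : 0 < Q2D) (hR : 0 < R) (hf : 0 < f) (ho : 0 < o) (hα : 1 < α)
    (hδ : 0 ≤ δ) (hQmax : 0 ≤ Qmax)
    (p3D p2D r : Fin V → ℝ)
    (hb3 : ∀ i, p3D i = 0 ∨ p3D i = 1)
    (hb2 : ∀ i, p2D i = 0 ∨ p2D i = 1)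
    (hbr : ∀ i, r i = 0 ∨ r i = 1)
    (hmem : ∑ i, (p2D i + α * p3D i) ≤ δ - α)
    (hren : ∑ i, r i ≤ Qmax)
    (j : Fin V) (hj3 : p3D j = 0) (hjr : r j = 0)
    (T : (Fin V → ℝ) → (Fin V → ℝ) → (Fin V → ℝ) → Fin V → ℝ)
    (hT : ∀ p3 p2 rr i, T p3 p2 rr i =
      (1 - p3 i) * (rr i * (Q2D * o / f + (1 - p2 i) * (Q2D / R))
        + (1 - rr i) * (α * Q2D / R))) :
    (∑ i, (p2D i + α * Function.update p3D j 1 i) ≤ δ) ∧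
    (∑ i, r i ≤ Qmax) ∧
    (∑ i, T (Function.update p3D j 1) p2D r i
      = ∑ i, T p3D p2D r i - α * Q2D / R) ∧
    (0 < α * Q2D / R) ∧
    (∑ i, T (Function.update p3D j 1) p2D r i < ∑ i, T p3D p2D r i) ∧
    (∃ q3 q2 s : Fin V → ℝ,
      (∀ i, q3 i = 0 ∨ q3 i = 1) ∧ (∀ i, q2 i = 0 ∨ q2 i = 1) ∧
      (∀ i, s i = 0 ∨ s i = 1) ∧
      (∑ i, (q2 i + α * q3 i) ≤ δ) ∧ (∑ i, s i ≤ Qmax) ∧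
      ∑ i, T q3 q2 s i < ∑ i, T p3D p2D r i) := by
  have hαpos : (0:ℝ) < α := lt_trans one_pos hα
  have hpos : 0 < α * Q2D / R := by positivity
  have hmem' : ∑ i, (p2D i + α * Function.update p3D j 1 i) ≤ δ := by
    have := sum_diff_single j (fun i => p2D i + α * Function.update p3D j 1 i)
      (fun i => p2D i + α * p3D i)
      (fun i hi => by simp [Function.update_of_ne hi])
    rw [this]
    simp [hj3]
    linarith
  have hdelay : ∑ i, T (Function.update p3D j 1) p2D r i
      = ∑ i, T p3D p2D r i - α * Q2D / R := by
    have := sum_diff_single j (fun i => T (Function.update p3D j 1) p2D r i)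
      (fun i => T p3D p2D r i)
      (fun i hi => by simp only [hT, Function.update_of_ne hi])
    rw [this, hT, hT]
    simp [hj3, hjr]
    ring
  refine ⟨hmem', hren, hdelay, hpos, by rw [hdelay]; linarith, ?_⟩
  refine ⟨Function.update p3D j 1, p2D, r, ?_, hb2, hbr, hmem', hren, by rw [hdelay]; linarith⟩
  intro i
  rcases eq_or_ne i j with h | h
  · subst h; simp
  · simp [Function.update_of_ne h, hb3 i]
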